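/- The function ε̄ : A_i → ℝ, ε̄(C) = (1/(n+2)) · min{ |p_C(y_r) − p_C(y_s)| : p_C(y_r) ≠ p_C(y_s) } (y₁=o₁, y₂=o₂, y_{k+2}=x_k), is continuous and strictly positive on each set A_i = {C ∈ F(ℝ^d,n+2) : c̄p(C) = i}, for any 2 ≤ i ≤ n+2. -/

import Mathlib

open scoped RealInnerProductSpace

noncomputable section

variable {d n : ℕ}

/-- The unit vector `e_C = (o₂ − o₁)/‖o₂ − o₁‖` of a configuration with obstacles
`o₁ = C 0`, `o₂ = C 1`. -/
def eDir (C : Fin (n + 2) → EuclideanSpace ℝ (Fin d)) : EuclideanSpace ℝ (Fin d) :=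
  ‖C 1 - C 0‖⁻¹ • (C 1 - C 0)

/-- The orthogonal projection `p_C` onto the line `L_C` through `o₁ = C 0` and
`o₂ = C 1`: `p_C(x) = o₁ + ⟨x − o₁, e_C⟩ e_C`. -/
def projL (C : Fin (n + 2) → EuclideanSpace ℝ (Fin d))
    (x : EuclideanSpace ℝ (Fin d)) : EuclideanSpace ℝ (Fin d) :=
  C 0 + ⟪x - C 0, eDir C⟫ • eDir C

open Classical in
/-- `c̄p(C)`: the number of distinct projections of the `n+2` points of `C`
onto the line `L_C`. -/
def cp (C : Fin (n + 2) → EuclideanSpace ℝ (Fin d)) : ℕ :=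
  (Finset.univ.image fun i : Fin (n + 2) => projL C (C i)).card

/-- `ε̄(C) = (1/(n+2)) · min{ ‖p_C(y_r) − p_C(y_s)‖ : p_C(y_r) ≠ p_C(y_s) }`,
the minimum running over all pairs of entries of `C` (obstacles included). -/
def epsBar (C : Fin (n + 2) → EuclideanSpace ℝ (Fin d)) : ℝ :=
  (1 / (n + 2 : ℝ)) *
    sInf {r : ℝ | ∃ i j : Fin (n + 2),
      projL C (C i) ≠ projL C (C j) ∧ r = ‖projL C (C i) - projL C (C j)‖}

/-- The desingularization at time `t`: the obstacles `C 0, C 1` stay put and the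
`j`-th robot `x_j = C (j+1)` is shifted by `t·j·ε̄(C)` along `e_C`. -/
def desing (C : Fin (n + 2) → EuclideanSpace ℝ (Fin d)) (t : ℝ) :
    Fin (n + 2) → EuclideanSpace ℝ (Fin d) :=
  fun i => C i + (if 2 ≤ (i : ℕ) then t * ((i : ℕ) - 1 : ℕ) * epsBar C else 0) • eDir C

end

/-- The ordered configuration space `F(ℝ^d, n+2)`, as a subspace of `(ℝ^d)^{n+2}`. -/
abbrev ConfSp (d n : ℕ) :=
  {C : Fin (n + 2) → EuclideanSpace ℝ (Fin d) // Function.Injective C}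


/-- Auxiliary: if the fibers of `f` refine the fibers of `g` and they have the same
number of fibers, then the fibers coincide. -/
lemma kernel_eq_of_card_image_eq {α β : Type*} [Fintype α] [DecidableEq β]
    (f g : α → β)
    (hfg : ∀ r s, f r = f s → g r = g s)
    (hcard : (Finset.univ.image g).card = (Finset.univ.image f).card) :
    ∀ r s : α, g r = g s → f r = f s := by
  classical
  set h : β → β := fun x => if hx : ∃ r, f r = x then g hx.choose else x with hh
  have hcomp : ∀ r, h (f r) = g r := by
    intro r
    have hx : ∃ t, f t = f r := ⟨r, rfl⟩
    simp only [hh, dif_pos hx]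
    exact hfg _ _ hx.choose_spec
  have himg : (Finset.univ.image g) = (Finset.univ.image f).image h := by
    rw [Finset.image_image]
    exact Finset.image_congr (fun r _ => (hcomp r).symm)
  have hinj : Set.InjOn h (Finset.univ.image f) := by
    apply Finset.injOn_of_card_image_eq
    rw [← himg, hcard]
  intro r s hgs
  exact hinj (Finset.mem_image_of_mem f (Finset.mem_univ r))
    (Finset.mem_image_of_mem f (Finset.mem_univ s))
    (by rw [hcomp, hcomp]; exact hgs)

open Classical in
/-- The (finite, possibly empty) set of pairs of indices with distinct projections. -/
noncomputable def sepPairs {d n : ℕ} (C : Fin (n + 2) → EuclideanSpace ℝ (Fin d)) :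
    Finset (Fin (n + 2) × Fin (n + 2)) :=
  Finset.univ.filter fun p => projL C (C p.1) ≠ projL C (C p.2)

section Aux
variable {d n : ℕ}

lemma sepPairs_nonempty {C : Fin (n + 2) → EuclideanSpace ℝ (Fin d)} {i : ℕ}
    (hi₂ : 2 ≤ i) (hC : cp C = i) : (sepPairs C).Nonempty := by
  classical
  have h1 : 1 < cp C := by omega
  unfold cp at h1
  rw [Finset.one_lt_card] at h1
  obtain ⟨x, hx, y, hy, hxy⟩ := h1
  obtain ⟨a, -, rfl⟩ := Finset.mem_image.1 hx
  obtain ⟨b, -, rfl⟩ := Finset.mem_image.1 hy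
  exact ⟨(a, b), Finset.mem_filter.2 ⟨Finset.mem_univ _, hxy⟩⟩

lemma epsBar_eq_inf' (C : Fin (n + 2) → EuclideanSpace ℝ (Fin d))
    (hne : (sepPairs C).Nonempty) :
    epsBar C = (1 / (n + 2 : ℝ)) *
      (sepPairs C).inf' hne (fun p => ‖projL C (C p.1) - projL C (C p.2)‖) := by
  unfold epsBar
  congr 1
  rw [Finset.inf'_eq_csInf_image]
  congr 1
  ext r
  simp only [Set.mem_setOf_eq, Set.mem_image, Finset.mem_coe, sepPairs, Finset.mem_filter,
    Finset.mem_univ, true_and]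
  constructor
  · rintro ⟨a, b, hab, rfl⟩; exact ⟨(a, b), hab, rfl⟩
  · rintro ⟨p, hp, rfl⟩; exact ⟨p.1, p.2, hp, rfl⟩

lemma epsBar_pos' {C : Fin (n + 2) → EuclideanSpace ℝ (Fin d)} {i : ℕ}
    (hi₂ : 2 ≤ i) (hC : cp C = i) : 0 < epsBar C := by
  have hne := sepPairs_nonempty hi₂ hC
  rw [epsBar_eq_inf' C hne]
  apply mul_pos (by positivity)
  rw [Finset.lt_inf'_iff]
  intro p hp
  classical
  have hp' : projL C (C p.1) ≠ projL C (C p.2) := by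
    have := hp
    unfold sepPairs at this
    exact (Finset.mem_filter.1 this).2
  exact norm_pos_iff.2 (sub_ne_zero.2 hp')

lemma continuous_eval (k : Fin (n + 2)) : Continuous fun C : ConfSp d n => C.1 k :=
  (continuous_apply k).comp continuous_subtype_val

lemma sub_ne_zero' (C : ConfSp d n) : C.1 1 - C.1 0 ≠ 0 := by
  intro h
  have h10 := C.2 (sub_eq_zero.1 h)
  simp [Fin.ext_iff] at h10

lemma continuous_eDir : Continuous fun C : ConfSp d n => eDir C.1 := by
  unfold eDir
  exact (((continuous_eval 1).sub (continuous_eval 0)).norm.inv₀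
    (fun C => norm_ne_zero_iff.2 (sub_ne_zero' C))).smul
    ((continuous_eval 1).sub (continuous_eval 0))

lemma continuous_projL (k : Fin (n + 2)) :
    Continuous fun C : ConfSp d n => projL C.1 (C.1 k) := by
  unfold projL
  exact (continuous_eval 0).add
    ((Continuous.inner (𝕜 := ℝ) ((continuous_eval k).sub (continuous_eval 0)) continuous_eDir).smul
      continuous_eDir)

lemma cp_eq_card (C : Fin (n + 2) → EuclideanSpace ℝ (Fin d))
    [inst : DecidableEq (EuclideanSpace ℝ (Fin d))] :
    cp C = (Finset.univ.image fun r : Fin (n + 2) => projL C (C r)).card := by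
  unfold cp
  have h : (fun a b => Classical.propDecidable (a = b) :
      DecidableEq (EuclideanSpace ℝ (Fin d))) = inst := Subsingleton.elim _ _
  convert rfl

lemma sepPairs_locally_const {C C₀ : ConfSp d n}
    (hCU : ∀ p ∈ sepPairs C₀.1, projL C.1 (C.1 p.1) ≠ projL C.1 (C.1 p.2))
    (hcp : cp C.1 = cp C₀.1) : sepPairs C.1 = sepPairs C₀.1 := by
  classical
  have hfg : ∀ r s, projL C.1 (C.1 r) = projL C.1 (C.1 s) →
      projL C₀.1 (C₀.1 r) = projL C₀.1 (C₀.1 s) := by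
    intro r s h
    by_contra hne'
    exact hCU (r, s) (Finset.mem_filter.2 ⟨Finset.mem_univ _, hne'⟩) h
  have hcard : ((Finset.univ.image fun r => projL C₀.1 (C₀.1 r)).card : ℕ)
      = (Finset.univ.image fun r => projL C.1 (C.1 r)).card := by
    rw [← cp_eq_card, ← cp_eq_card]
    exact hcp.symm
  have hker := kernel_eq_of_card_image_eq
    (fun r => projL C.1 (C.1 r)) (fun r => projL C₀.1 (C₀.1 r)) hfg hcard
  unfold sepPairs
  ext p
  simp only [Finset.mem_filter, Finset.mem_univ, true_and]
  exact ⟨fun h h0 => h (hker _ _ h0), fun h h0 => h (hfg _ _ h0)⟩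

end Aux

lemma epsBar_eq_inf'' {d n : ℕ} (C : Fin (n + 2) → EuclideanSpace ℝ (Fin d))
    (P : Finset (Fin (n + 2) × Fin (n + 2))) (hP : P = sepPairs C) (hne : P.Nonempty) :
    epsBar C = (1 / (n + 2 : ℝ)) *
      P.inf' hne (fun p => ‖projL C (C p.1) - projL C (C p.2)‖) := by
  subst hP
  exact epsBar_eq_inf' C hne

lemma heqA {d n : ℕ} {i : ℕ} (hi₂ : 2 ≤ i) (C C₀ : ConfSp d n)
    (hP₀ : (sepPairs C₀.1).Nonempty)
    (hCU : ∀ p ∈ sepPairs C₀.1, projL C.1 (C.1 p.1) ≠ projL C.1 (C.1 p.2))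
    (hCi : cp C.1 = i) (hC₀i : cp C₀.1 = i) :
    epsBar C.1 = (1 / (n + 2 : ℝ)) *
      (sepPairs C₀.1).inf' hP₀ (fun p => ‖projL C.1 (C.1 p.1) - projL C.1 (C.1 p.2)‖) :=
  epsBar_eq_inf'' C.1 (sepPairs C₀.1)
    (sepPairs_locally_const hCU (hCi.trans hC₀i.symm)).symm hP₀

/-- On each stratum `A_i = {C : c̄p(C) = i}` (`2 ≤ i ≤ n+2`), the function
`ε̄(C) = (1/(n+2))·min{‖p_C(y_r) − p_C(y_s)‖ : p_C(y_r) ≠ p_C(y_s)}` is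
well defined, strictly positive and continuous. -/
theorem epsBar_pos_continuousOn (d n : ℕ) (i : ℕ) (hi₂ : 2 ≤ i) (hi : i ≤ n + 2) :
    (∀ C : ConfSp d n, cp C.1 = i → 0 < epsBar C.1) ∧
    ContinuousOn (fun C : ConfSp d n => epsBar C.1) {C | cp C.1 = i} := by
  classical
  refine ⟨fun C hC => epsBar_pos' hi₂ hC, ?_⟩
  intro C₀ hC₀
  have hC₀i : cp C₀.1 = i := hC₀
  have hP₀ : (sepPairs C₀.1).Nonempty := sepPairs_nonempty hi₂ hC₀i
  have hFcont : Continuous (fun C : ConfSp d n => (1 / (n + 2 : ℝ)) *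
      (sepPairs C₀.1).inf' hP₀ (fun p => ‖projL C.1 (C.1 p.1) - projL C.1 (C.1 p.2)‖)) :=
    continuous_const.mul (Continuous.finset_inf'_apply hP₀
      (fun p _ => ((continuous_projL p.1).sub (continuous_projL p.2)).norm))
  set U : Set (ConfSp d n) :=
    {C | ∀ p ∈ sepPairs C₀.1, projL C.1 (C.1 p.1) ≠ projL C.1 (C.1 p.2)} with hU
  have hUopen : IsOpen U := by
    have : U = ⋂ p ∈ sepPairs C₀.1,
        {C : ConfSp d n | projL C.1 (C.1 p.1) = projL C.1 (C.1 p.2)}ᶜ := by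
      ext C; simp [hU]
    rw [this]
    exact isOpen_biInter_finset fun p _ =>
      (isClosed_eq (continuous_projL p.1) (continuous_projL p.2)).isOpen_compl
  have hC₀U : C₀ ∈ U := fun p hp => (Finset.mem_filter.1 hp).2
  apply ContinuousWithinAt.congr_of_eventuallyEq hFcont.continuousWithinAt
  · filter_upwards [self_mem_nhdsWithin,
      mem_nhdsWithin_of_mem_nhds (hUopen.mem_nhds hC₀U)] with C hCs hCU
    exact heqA hi₂ C C₀ hP₀ hCU hCs hC₀i
  · exact heqA hi₂ C₀ C₀ hP₀ hC₀U hC₀i hC₀i
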